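/- In a degree-balanced directed multigraph of negative total weight, if every directed cycle through a distinguished edge e has weight at least W ≥ 0, then the multigraph obtained by deleting some directed cycle containing e contains a directed cycle of negative weight avoiding e. -/

import Mathlib

def IsDirCycle {V : Type*} (l : List (V × V × ℤ)) : Prop :=
  l ≠ [] ∧ l.Chain' (fun e f => e.2.1 = f.1) ∧
    l.getLast?.map (fun e => e.2.1) = l.head?.map (fun e => e.1)

def DegBalanced {V : Type*} [DecidableEq V] (E : Multiset (V × V × ℤ)) : Prop :=
  ∀ v : V, (E.filter fun e => e.1 = v).card = (E.filter fun e => e.2.1 = v).card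

def wsum {V : Type*} (E : Multiset (V × V × ℤ)) : ℤ := (E.map fun e => e.2.2).sum

section aux
variable {V : Type*} [DecidableEq V]

lemma chain_count (l : List (V × V × ℤ))
    (hch : l.Chain' (fun e f => e.2.1 = f.1)) (v : V) :
    (l.filter fun e => e.2.1 = v).length
      + (if l.head?.map (fun e => e.1) = some v then 1 else 0)
    = (l.filter fun e => e.1 = v).length
      + (if l.getLast?.map (fun e => e.2.1) = some v then 1 else 0) := by
  induction l with
  | nil => simp
  | cons a t ih =>
    cases t with
    | nil => simp [List.filter]; split <;> split <;> simp_all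
    | cons b t' =>
      have h1 : a.2.1 = b.1 := (List.isChain_cons_cons.mp hch).1
      have h2 := ih (List.isChain_cons_cons.mp hch).2
      simp only [List.filter_cons, List.head?_cons, List.getLast?_cons_cons] at *
      by_cases hav : a.2.1 = v <;> by_cases hbv : b.1 = v <;>
        by_cases hasv : a.1 = v <;>
        simp_all <;> omega

lemma coe_filter_card (l : List (V × V × ℤ)) (p : V × V × ℤ → Prop) [DecidablePred p] :
    ((l : Multiset (V × V × ℤ)).filter p).card = (l.filter fun e => p e).length := by
  simp

lemma can_extend (E : Multiset (V × V × ℤ)) (hbal : DegBalanced E)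
    (T : List (V × V × ℤ)) (hne : T ≠ [])
    (hch : T.Chain' (fun e f => e.2.1 = f.1)) (hle : (T : Multiset (V × V × ℤ)) ≤ E)
    (hnc : ¬ T.getLast?.map (fun e => e.2.1) = T.head?.map (fun e => e.1)) :
    ∃ f : V × V × ℤ, f ∈ E - (T : Multiset (V × V × ℤ)) ∧
      T.getLast?.map (fun e => e.2.1) = some f.1 := by
  obtain ⟨a, ha⟩ : ∃ a, T.getLast? = some a := by
    cases h : T.getLast? with
    | none => exact absurd (List.getLast?_eq_none_iff.mp h) hne
    | some a => exact ⟨a, rfl⟩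
  set v := a.2.1 with hv
  have hc := chain_count T hch v
  rw [ha] at hc hnc
  simp only [Option.map_some] at hc hnc
  have hhne : ¬ (Option.map (fun e => e.1) T.head? = some v) := fun h => hnc h.symm
  rw [if_neg hhne] at hc
  norm_num at hc
  have hin : ((T : Multiset (V × V × ℤ)).filter (fun e => e.2.1 = v)).card ≤
      (E.filter (fun e => e.2.1 = v)).card :=
    Multiset.card_le_card (Multiset.filter_le_filter _ hle)
  have houtin : ((T : Multiset (V × V × ℤ)).filter (fun e => e.2.1 = v)).card
      = ((T : Multiset (V × V × ℤ)).filter (fun e => e.1 = v)).card + 1 := by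
    rw [coe_filter_card, coe_filter_card]
    simpa [hv] using hc
  have hb := hbal v
  have hpos : 0 < ((E - (T : Multiset (V × V × ℤ))).filter (fun e => e.1 = v)).card := by
    rw [Multiset.filter_sub, Multiset.card_sub (Multiset.filter_le_filter _ hle)]
    omega
  obtain ⟨f, hf⟩ := Multiset.card_pos_iff_exists_mem.mp hpos
  rw [Multiset.mem_filter] at hf
  exact ⟨f, hf.1, by rw [ha]; simp [hf.2, hv]⟩

lemma extend_trail (E : Multiset (V × V × ℤ)) (hbal : DegBalanced E) :
    ∀ n (T : List (V × V × ℤ)), (E - (T : Multiset (V × V × ℤ))).card ≤ n → T ≠ [] →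
      T.Chain' (fun e f => e.2.1 = f.1) → (T : Multiset (V × V × ℤ)) ≤ E →
      ∃ C : List (V × V × ℤ), IsDirCycle C ∧ (C : Multiset (V × V × ℤ)) ≤ E := by
  intro n
  induction n with
  | zero =>
    intro T hcard hne hch hle
    by_cases hcl : T.getLast?.map (fun e => e.2.1) = T.head?.map (fun e => e.1)
    · exact ⟨T, ⟨hne, hch, hcl⟩, hle⟩
    · obtain ⟨f, hf, -⟩ := can_extend E hbal T hne hch hle hcl
      have : E - (T : Multiset (V × V × ℤ)) = 0 := Multiset.card_eq_zero.mp (Nat.le_zero.mp hcard)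
      rw [this] at hf
      exact absurd hf (Multiset.notMem_zero f)
  | succ n ih =>
    intro T hcard hne hch hle
    by_cases hcl : T.getLast?.map (fun e => e.2.1) = T.head?.map (fun e => e.1)
    · exact ⟨T, ⟨hne, hch, hcl⟩, hle⟩
    · obtain ⟨f, hf, hlast⟩ := can_extend E hbal T hne hch hle hcl
      have hsle : ({f} : Multiset _) ≤ E - (T : Multiset (V × V × ℤ)) := Multiset.singleton_le.mpr hf
      have hle' : ((T ++ [f] : List _) : Multiset (V × V × ℤ)) ≤ E := by
        have : (T : Multiset (V × V × ℤ)) + {f} ≤ (T : Multiset (V × V × ℤ)) + (E - (T : Multiset (V × V × ℤ))) :=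
          add_le_add le_rfl hsle
        rwa [add_tsub_cancel_of_le hle, ← Multiset.coe_singleton, Multiset.coe_add] at this
      have hch' : (T ++ [f]).Chain' (fun e g => e.2.1 = g.1) := by
        show List.IsChain _ (T ++ [f])
        rw [List.isChain_append]
        refine ⟨hch, List.isChain_singleton f, ?_⟩
        intro x hx y hy
        simp only [List.head?_cons, Option.mem_def, Option.some.injEq] at hy
        rw [hx] at hlast
        simp only [Option.map_some, Option.some.injEq] at hlast
        rw [← hy]; exact hlast
      have hcard' : (E - ((T ++ [f] : List _) : Multiset (V × V × ℤ))).card ≤ n := by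
        have hsplit : ((T ++ [f] : List _) : Multiset (V × V × ℤ))
            = (T : Multiset (V × V × ℤ)) + {f} := by
          rw [← Multiset.coe_singleton, Multiset.coe_add]
        rw [hsplit, tsub_add_eq_tsub_tsub, Multiset.card_sub hsle,
          Multiset.card_singleton]
        omega
      exact ih (T ++ [f]) hcard' (by simp) hch' hle'

lemma exists_cycle (E : Multiset (V × V × ℤ)) (hbal : DegBalanced E) (hE : E ≠ 0) :
    ∃ C : List (V × V × ℤ), IsDirCycle C ∧ (C : Multiset (V × V × ℤ)) ≤ E := by
  obtain ⟨e0, he0⟩ := Multiset.exists_mem_of_ne_zero hE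
  exact extend_trail E hbal E.card [e0] (by
      have := Multiset.card_sub (s := E) (t := ({e0} : Multiset _))
        (Multiset.singleton_le.mpr he0)
      simp only [Multiset.coe_singleton] at *
      omega)
    (by simp) (List.isChain_singleton e0)
    (by rw [Multiset.coe_singleton]; exact Multiset.singleton_le.mpr he0)

lemma cycle_sub_balanced (E : Multiset (V × V × ℤ)) (hbal : DegBalanced E)
    (C : List (V × V × ℤ)) (hc : IsDirCycle C) (hle : (C : Multiset (V × V × ℤ)) ≤ E) :
    DegBalanced (E - (C : Multiset (V × V × ℤ))) := by
  intro v
  have hcc := chain_count C hc.2.1 v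
  rw [hc.2.2] at hcc
  have hCeq : ((C : Multiset (V × V × ℤ)).filter (fun e => e.1 = v)).card
      = ((C : Multiset (V × V × ℤ)).filter (fun e => e.2.1 = v)).card := by
    rw [coe_filter_card, coe_filter_card]
    omega
  rw [Multiset.filter_sub, Multiset.filter_sub,
    Multiset.card_sub (Multiset.filter_le_filter _ hle),
    Multiset.card_sub (Multiset.filter_le_filter _ hle), hbal v, hCeq]

lemma wsum_sub (E : Multiset (V × V × ℤ)) (C : List (V × V × ℤ))
    (hle : (C : Multiset (V × V × ℤ)) ≤ E) :
    wsum (E - (C : Multiset (V × V × ℤ))) = wsum E - (C.map fun f => f.2.2).sum := by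
  have h : (E - (C : Multiset (V × V × ℤ))) + (C : Multiset (V × V × ℤ)) = E :=
    tsub_add_cancel_of_le hle
  have : wsum ((E - (C : Multiset (V × V × ℤ))) + (C : Multiset (V × V × ℤ)))
      = wsum (E - (C : Multiset (V × V × ℤ))) + wsum (C : Multiset (V × V × ℤ)) := by
    simp [wsum]
  rw [h] at this
  have hc : wsum (C : Multiset (V × V × ℤ)) = (C.map fun f => f.2.2).sum := by
    simp [wsum]
  omega

lemma exists_neg_cycle :
    ∀ n (E : Multiset (V × V × ℤ)), E.card ≤ n → DegBalanced E → wsum E < 0 →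
      ∃ C : List (V × V × ℤ), IsDirCycle C ∧ (C : Multiset (V × V × ℤ)) ≤ E ∧ (C.map fun f => f.2.2).sum < 0 := by
  intro n
  induction n with
  | zero =>
    intro E hcard hbal hneg
    rw [Multiset.card_eq_zero.mp (Nat.le_zero.mp hcard)] at hneg
    simp [wsum] at hneg
  | succ n ih =>
    intro E hcard hbal hneg
    have hE : E ≠ 0 := by rintro rfl; simp [wsum] at hneg
    obtain ⟨C, hC, hCle⟩ := exists_cycle E hbal hE
    by_cases hw : (C.map fun f => f.2.2).sum < 0
    · exact ⟨C, hC, hCle, hw⟩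
    · push_neg at hw
      have hneg' : wsum (E - (C : Multiset (V × V × ℤ))) < 0 := by
        rw [wsum_sub E C hCle]; omega
      have hbal' := cycle_sub_balanced E hbal C hC hCle
      have hcard' : (E - (C : Multiset (V × V × ℤ))).card ≤ n := by
        rw [Multiset.card_sub hCle]
        have h1 : 1 ≤ (C : Multiset (V × V × ℤ)).card := by
          rw [Multiset.coe_card]
          exact List.length_pos_iff.mpr hC.1
        have h3 : (C : Multiset (V × V × ℤ)).card ≤ E.card := Multiset.card_le_card hCle
        omega
      obtain ⟨C', hC', hC'le, hC'w⟩ := ih (E - (C : Multiset (V × V × ℤ))) hcard' hbal' hneg'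
      exact ⟨C', hC', le_trans hC'le (tsub_le_self), hC'w⟩
end aux

theorem delete_cycle_through_e_leaves_neg_cycle_avoiding_e {V : Type*}
    [Fintype V] [DecidableEq V]
    (H : Multiset (V × V × ℤ)) (hbal : DegBalanced H) (hneg : wsum H < 0)
    (e : V × V × ℤ) (he : e ∈ H) (W : ℤ) (hW : 0 ≤ W)
    (hthru : ∃ C : List (V × V × ℤ), IsDirCycle C ∧ (C : Multiset (V × V × ℤ)) ≤ H ∧ e ∈ C)
    (hbound : ∀ C : List (V × V × ℤ), IsDirCycle C → (C : Multiset (V × V × ℤ)) ≤ H →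
      e ∈ C → W ≤ (C.map fun f => f.2.2).sum) :
    ∃ C1 : List (V × V × ℤ), IsDirCycle C1 ∧ (C1 : Multiset (V × V × ℤ)) ≤ H ∧ e ∈ C1 ∧
      ∃ C2 : List (V × V × ℤ), IsDirCycle C2 ∧
        (C2 : Multiset (V × V × ℤ)) ≤ H - (C1 : Multiset (V × V × ℤ)) ∧
        e ∉ C2 ∧ (C2.map fun f => f.2.2).sum < 0 := by
  obtain ⟨C1, hC1, hC1le, heC1⟩ := hthru
  refine ⟨C1, hC1, hC1le, heC1, ?_⟩
  have hWle := hbound C1 hC1 hC1le heC1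
  have hneg' : wsum (H - (C1 : Multiset (V × V × ℤ))) < 0 := by
    rw [wsum_sub H C1 hC1le]; omega
  have hbal' := cycle_sub_balanced H hbal C1 hC1 hC1le
  obtain ⟨C2, hC2, hC2le, hC2w⟩ :=
    exists_neg_cycle (H - (C1 : Multiset (V × V × ℤ))).card (H - (C1 : Multiset (V × V × ℤ))) le_rfl hbal' hneg'
  refine ⟨C2, hC2, hC2le, ?_, hC2w⟩
  intro heC2
  have := hbound C2 hC2 (le_trans hC2le tsub_le_self) heC2
  omega
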